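/- Let n ≥ 3 be an integer, α ∈ [0,1), and ρ > 0. Then there exist constants 0 < c ≤ C, depending only on n and α, such that for every r with 0 < r < ρ: c·r^{2−n+α} ≤ ∫_{B_ρ ∩ {xₙ > 0}} |x + r eₙ|^{2−2n+α} dx ≤ C·r^{2−n+α}, where B_ρ is the open ball of radius ρ centered at the origin of ℝⁿ and eₙ is the n-th standard basis vector. In particular the integral is finite. -/

import Mathlib

open MeasureTheory Metric

open Set Real Module
open scoped Pointwise

lemma euclid_abs_apply_le_norm {n : ℕ} (x : EuclideanSpace ℝ (Fin n)) (i : Fin n) :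
    |x i| ≤ ‖x‖ := by
  rw [EuclideanSpace.norm_eq, ← Real.sqrt_sq_eq_abs (x i)]
  apply Real.sqrt_le_sqrt
  have : x i ^ 2 = ‖x i‖ ^ 2 := by rw [Real.norm_eq_abs, sq_abs]
  rw [this]
  exact Finset.single_le_sum (fun j _ => sq_nonneg ‖x j‖) (Finset.mem_univ i)

lemma aux_integrableOn_compl {n : ℕ} (hn : 1 ≤ n) {β : ℝ} (hβ : β < -(n : ℝ)) {r : ℝ}
    (hr : 0 < r) :
    IntegrableOn (fun y : EuclideanSpace ℝ (Fin n) => ‖y‖ ^ β)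
      (closedBall (0 : EuclideanSpace ℝ (Fin n)) r)ᶜ := by
  obtain ⟨q, rfl⟩ : ∃ q, β = -q := ⟨-β, by ring⟩
  have hqn : (n : ℝ) < q := by linarith
  have hq0 : 0 < q := lt_of_le_of_lt (Nat.cast_nonneg n) hqn
  have hK : IntegrableOn (fun y : EuclideanSpace ℝ (Fin n) => ‖y‖ ^ (-q))
      (closedBall (0 : EuclideanSpace ℝ (Fin n)) 1)ᶜ := by
    have hint : Integrable (fun y : EuclideanSpace ℝ (Fin n) => (1 + ‖y‖) ^ (-q)) :=
      integrable_one_add_norm (by rw [finrank_euclideanSpace_fin]; exact hqn)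
    have hint2 : IntegrableOn (fun y : EuclideanSpace ℝ (Fin n) => 2 ^ q * (1 + ‖y‖) ^ (-q))
        (closedBall (0 : EuclideanSpace ℝ (Fin n)) 1)ᶜ :=
      (hint.integrableOn).const_mul _
    refine hint2.mono' ?_ ?_
    · exact Measurable.aestronglyMeasurable (by fun_prop)
    · filter_upwards [self_mem_ae_restrict measurableSet_closedBall.compl] with y hy
      have hy1 : 1 < ‖y‖ := by
        simpa [mem_closedBall_zero_iff] using hy
      have hy0 : 0 < ‖y‖ := lt_trans one_pos hy1
      rw [Real.norm_eq_abs, abs_of_nonneg (Real.rpow_nonneg (norm_nonneg y) _)]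
      have key : (1 + ‖y‖) ^ q ≤ 2 ^ q * ‖y‖ ^ q := by
        calc (1 + ‖y‖) ^ q ≤ (2 * ‖y‖) ^ q :=
              Real.rpow_le_rpow (by positivity) (by linarith) hq0.le
          _ = 2 ^ q * ‖y‖ ^ q := Real.mul_rpow (by norm_num) (norm_nonneg y)
      have h1 : (0:ℝ) < ‖y‖ ^ q := Real.rpow_pos_of_pos hy0 q
      have h2 : (0:ℝ) < (1 + ‖y‖) ^ q := Real.rpow_pos_of_pos (by positivity) q
      calc ‖y‖ ^ (-q) = 1 / ‖y‖ ^ q := by rw [Real.rpow_neg hy0.le, one_div]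
        _ ≤ 2 ^ q / (1 + ‖y‖) ^ q := by
            rw [div_le_div_iff₀ h1 h2, one_mul]; exact key
        _ = 2 ^ q * (1 + ‖y‖) ^ (-q) := by
            rw [Real.rpow_neg (by positivity), div_eq_mul_inv]
  have hA : IntegrableOn (fun y : EuclideanSpace ℝ (Fin n) => ‖y‖ ^ (-q))
      (closedBall (0 : EuclideanSpace ℝ (Fin n)) (r + 1) \ ball 0 r) := by
    apply ContinuousOn.integrableOn_compact ((isCompact_closedBall _ _).diff isOpen_ball)
    refine ContinuousOn.rpow_const continuous_norm.continuousOn fun y hy => Or.inl ?_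
    have : ¬ ‖y‖ < r := by simpa [mem_ball_zero_iff] using hy.2
    have : 0 < ‖y‖ := lt_of_lt_of_le hr (not_lt.mp this)
    exact ne_of_gt this
  refine (hA.union hK).mono_set fun y hy => ?_
  have hyr : r < ‖y‖ := by simpa [mem_closedBall_zero_iff] using hy
  by_cases h : ‖y‖ ≤ r + 1
  · exact Or.inl ⟨by simpa [mem_closedBall_zero_iff] using h, by simp [mem_ball_zero_iff]; linarith⟩
  · exact Or.inr (by simp [mem_closedBall_zero_iff]; linarith)

lemma aux_smul_compl {n : ℕ} {r : ℝ} (hr : 0 < r) :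
    r • (closedBall (0 : EuclideanSpace ℝ (Fin n)) 1)ᶜ =
      (closedBall (0 : EuclideanSpace ℝ (Fin n)) r)ᶜ := by
  ext y
  rw [Set.mem_smul_set_iff_inv_smul_mem₀ hr.ne']
  simp only [Set.mem_compl_iff, mem_closedBall_zero_iff, norm_smul, norm_inv,
    Real.norm_eq_abs, abs_of_pos hr]
  rw [inv_mul_le_iff₀ hr, mul_one]

lemma aux_scaling {n : ℕ} (hn : 1 ≤ n) (β : ℝ) {r : ℝ} (hr : 0 < r) :
    ∫ y in (closedBall (0 : EuclideanSpace ℝ (Fin n)) r)ᶜ, ‖y‖ ^ β =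
      r ^ (β + n) * ∫ y in (closedBall (0 : EuclideanSpace ℝ (Fin n)) 1)ᶜ, ‖y‖ ^ β := by
  have h := MeasureTheory.Measure.setIntegral_comp_smul_of_pos
    (volume : Measure (EuclideanSpace ℝ (Fin n)))
    (fun y : EuclideanSpace ℝ (Fin n) => ‖y‖ ^ β)
    ((closedBall (0 : EuclideanSpace ℝ (Fin n)) 1)ᶜ) hr
  rw [aux_smul_compl hr] at h
  have h2 : ∀ x : EuclideanSpace ℝ (Fin n), ‖r • x‖ ^ β = r ^ β * ‖x‖ ^ β := by
    intro x
    rw [norm_smul, Real.norm_eq_abs, abs_of_pos hr, Real.mul_rpow hr.le (norm_nonneg x)]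
  simp only [h2] at h
  rw [integral_const_mul] at h
  have hfr : Module.finrank ℝ (EuclideanSpace ℝ (Fin n)) = n := finrank_euclideanSpace_fin
  rw [hfr] at h
  have hrn : (0:ℝ) < r ^ n := pow_pos hr n
  rw [smul_eq_mul] at h
  have : ∫ y in (closedBall (0 : EuclideanSpace ℝ (Fin n)) r)ᶜ, ‖y‖ ^ β =
      r ^ n * (r ^ β * ∫ y in (closedBall (0 : EuclideanSpace ℝ (Fin n)) 1)ᶜ, ‖y‖ ^ β) := by
    rw [h, ← mul_assoc, mul_inv_cancel₀ hrn.ne', one_mul]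
  rw [this, Real.rpow_add hr, Real.rpow_natCast]; ring

set_option maxHeartbeats 1000000 in
/-- For `n ≥ 3` and `α ∈ [0,1)` there are constants `0 < c ≤ C`, depending
only on `n` and `α`, such that for all `0 < r < ρ` the integral of `|x + r eₙ|^(2-2n+α)` over
`B_ρ ∩ {xₙ > 0}` is finite and comparable to `r^(2-n+α)` from above and below. -/
theorem halfspace_singular_integral_two_sided_bound
    (n : ℕ) (hn : 3 ≤ n) (α : ℝ) (hα0 : 0 ≤ α) (hα1 : α < 1) :
    ∃ c C : ℝ, 0 < c ∧ c ≤ C ∧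
      ∀ ρ r : ℝ, 0 < r → r < ρ →
        IntegrableOn
          (fun x : EuclideanSpace ℝ (Fin n) =>
            ‖x + r • EuclideanSpace.single (⟨n - 1, by omega⟩ : Fin n) (1 : ℝ)‖
              ^ (2 - 2 * (n : ℝ) + α))
          (ball 0 ρ ∩ {x | 0 < x (⟨n - 1, by omega⟩ : Fin n)}) ∧
        c * r ^ (2 - (n : ℝ) + α) ≤
          (∫ x in ball (0 : EuclideanSpace ℝ (Fin n)) ρ
              ∩ {x | 0 < x (⟨n - 1, by omega⟩ : Fin n)},
            ‖x + r • EuclideanSpace.single (⟨n - 1, by omega⟩ : Fin n) (1 : ℝ)‖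
              ^ (2 - 2 * (n : ℝ) + α)) ∧
        (∫ x in ball (0 : EuclideanSpace ℝ (Fin n)) ρ
              ∩ {x | 0 < x (⟨n - 1, by omega⟩ : Fin n)},
            ‖x + r • EuclideanSpace.single (⟨n - 1, by omega⟩ : Fin n) (1 : ℝ)‖
              ^ (2 - 2 * (n : ℝ) + α)) ≤
          C * r ^ (2 - (n : ℝ) + α) := by
  have hn3 : (3 : ℝ) ≤ (n : ℝ) := by exact_mod_cast hn
  haveI : Nontrivial (EuclideanSpace ℝ (Fin n)) :=
    Module.nontrivial_of_finrank_pos (R := ℝ)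
      (by rw [finrank_euclideanSpace_fin]; omega)
  set i : Fin n := ⟨n - 1, by omega⟩ with hi
  set β : ℝ := 2 - 2 * (n : ℝ) + α with hβdef
  have hβ : β < -(n : ℝ) := by rw [hβdef]; linarith
  have hβ0 : β < 0 := by linarith
  have hexp : β + (n : ℝ) = 2 - (n : ℝ) + α := by rw [hβdef]; ring
  set m₁ : ℝ := (volume (ball (0 : EuclideanSpace ℝ (Fin n)) 1)).toReal with hm₁def
  have hm₁ : 0 < m₁ :=
    ENNReal.toReal_pos (measure_ball_pos _ _ one_pos).ne' measure_ball_lt_top.ne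
  set I₁ : ℝ := ∫ y in (closedBall (0 : EuclideanSpace ℝ (Fin n)) 1)ᶜ, ‖y‖ ^ β with hI₁def
  have hI₁0 : 0 ≤ I₁ :=
    integral_nonneg fun y => Real.rpow_nonneg (norm_nonneg y) β
  have h2β : (0 : ℝ) < 2 ^ β := Real.rpow_pos_of_pos two_pos β
  set c₀ : ℝ := 2 ^ β * (1 / 4 : ℝ) ^ n * m₁ with hc₀def
  have hc₀ : 0 < c₀ := by positivity
  refine ⟨c₀, max c₀ I₁, hc₀, le_max_left _ _, ?_⟩
  intro ρ r hr hrρ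
  set v : EuclideanSpace ℝ (Fin n) := r • EuclideanSpace.single i (1 : ℝ) with hv
  have hvnorm : ‖v‖ = r := by
    rw [hv, norm_smul, EuclideanSpace.norm_single, norm_one, Real.norm_eq_abs,
      abs_of_pos hr, mul_one]
  set S : Set (EuclideanSpace ℝ (Fin n)) := ball 0 ρ ∩ {x | 0 < x i} with hS
  have hMP : MeasurePreserving (fun x : EuclideanSpace ℝ (Fin n) => x + v) volume volume :=
    measurePreserving_add_right volume v
  have hEmb : MeasurableEmbedding (fun x : EuclideanSpace ℝ (Fin n) => x + v) :=
    (MeasurableEquiv.addRight v).measurableEmbedding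
  have hcoord : ∀ x : EuclideanSpace ℝ (Fin n), (x + v) i = x i + r := by
    intro x
    simp [hv, EuclideanSpace.single_apply]
  have hpos_norm : ∀ x : EuclideanSpace ℝ (Fin n), 0 < x i → r < ‖x + v‖ := by
    intro x hxi
    calc r < x i + r := by linarith
      _ ≤ |(x + v) i| := by rw [hcoord]; exact le_abs_self _
      _ ≤ ‖x + v‖ := euclid_abs_apply_le_norm _ i
  have hsub : (fun x : EuclideanSpace ℝ (Fin n) => x + v) '' S ⊆
      (closedBall (0 : EuclideanSpace ℝ (Fin n)) r)ᶜ := by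
    rintro y ⟨x, hx, rfl⟩
    simp only [Set.mem_compl_iff, mem_closedBall_zero_iff, not_le]
    exact hpos_norm x hx.2
  have hIbig := aux_integrableOn_compl (n := n) (by omega) hβ hr
  have hIT : IntegrableOn (fun y : EuclideanSpace ℝ (Fin n) => ‖y‖ ^ β)
      ((fun x : EuclideanSpace ℝ (Fin n) => x + v) '' S) := hIbig.mono_set hsub
  have hIS : IntegrableOn (fun x : EuclideanSpace ℝ (Fin n) => ‖x + v‖ ^ β) S := by
    have h' := (hMP.integrableOn_image hEmb).mp hIT
    simpa [Function.comp_def] using h'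
  have hval : ∫ x in S, ‖x + v‖ ^ β =
      ∫ y in (fun x : EuclideanSpace ℝ (Fin n) => x + v) '' S, ‖y‖ ^ β :=
    (hMP.setIntegral_image_emb hEmb (fun y => ‖y‖ ^ β) S).symm
  have hnonneg : (0 : EuclideanSpace ℝ (Fin n) → ℝ) ≤ᵐ[volume.restrict
      ((closedBall (0 : EuclideanSpace ℝ (Fin n)) r)ᶜ)] fun y => ‖y‖ ^ β :=
    Filter.Eventually.of_forall fun y => Real.rpow_nonneg (norm_nonneg y) β
  have hup : ∫ y in (fun x : EuclideanSpace ℝ (Fin n) => x + v) '' S, ‖y‖ ^ β ≤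
      ∫ y in (closedBall (0 : EuclideanSpace ℝ (Fin n)) r)ᶜ, ‖y‖ ^ β :=
    setIntegral_mono_set hIbig hnonneg (HasSubset.Subset.eventuallyLE hsub)
  have hscale := aux_scaling (n := n) (by omega) β hr
  have hrexp : r ^ (2 - (n : ℝ) + α) = r ^ β * r ^ (n : ℕ) := by
    rw [← hexp, Real.rpow_add hr, Real.rpow_natCast]
  -- lower bound ball
  set p : EuclideanSpace ℝ (Fin n) := (r / 2) • EuclideanSpace.single i (1 : ℝ) with hp
  have hpnorm : ‖p‖ = r / 2 := by
    rw [hp, norm_smul, EuclideanSpace.norm_single, norm_one, Real.norm_eq_abs,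
      abs_of_pos (by positivity), mul_one]
  have hBsubS : ball p (r / 4) ⊆ S := by
    intro z hz
    rw [mem_ball_iff_norm] at hz
    have hzi : r / 4 < z i := by
      have h1 : (z - p) i = z i - r / 2 := by simp [hp, EuclideanSpace.single_apply]
      have h2 : |z i - r / 2| < r / 4 := by
        rw [← h1]; exact lt_of_le_of_lt (euclid_abs_apply_le_norm _ i) hz
      have := (abs_lt.mp h2).1
      linarith
    have hznorm : ‖z‖ < r := by
      calc ‖z‖ = ‖z - p + p‖ := by rw [sub_add_cancel]
        _ ≤ ‖z - p‖ + ‖p‖ := norm_add_le _ _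
        _ < r / 4 + r / 2 := by rw [hpnorm]; linarith
        _ ≤ r := by linarith
    exact ⟨mem_ball_zero_iff.mpr (lt_trans hznorm hrρ), by
      simpa using lt_trans (by positivity : (0:ℝ) < r / 4) hzi⟩
  have hfB : ∀ x ∈ ball p (r / 4), (2 * r) ^ β ≤ ‖x + v‖ ^ β := by
    intro x hx
    have hxS := hBsubS hx
    have hxv_pos : 0 < ‖x + v‖ := lt_trans hr (hpos_norm x hxS.2)
    have hxnorm : ‖x‖ < r := by
      rw [mem_ball_iff_norm] at hx
      calc ‖x‖ = ‖x - p + p‖ := by rw [sub_add_cancel]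
        _ ≤ ‖x - p‖ + ‖p‖ := norm_add_le _ _
        _ < r / 4 + r / 2 := by rw [hpnorm]; linarith
        _ ≤ r := by linarith
    have hxv_le : ‖x + v‖ ≤ 2 * r := by
      calc ‖x + v‖ ≤ ‖x‖ + ‖v‖ := norm_add_le _ _
        _ ≤ 2 * r := by rw [hvnorm]; linarith
    exact Real.rpow_le_rpow_of_nonpos hxv_pos hxv_le hβ0.le
  have hIB : IntegrableOn (fun x : EuclideanSpace ℝ (Fin n) => ‖x + v‖ ^ β)
      (ball p (r / 4)) := hIS.mono_set hBsubS
  have hvolB : (volume (ball p (r / 4))).toReal = (r / 4) ^ n * m₁ := by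
    rw [Measure.addHaar_ball volume p (by positivity : (0:ℝ) ≤ r / 4), ENNReal.toReal_mul,
      ENNReal.toReal_ofReal (by positivity), finrank_euclideanSpace_fin, hm₁def]
  have hlow : c₀ * r ^ (2 - (n : ℝ) + α) ≤ ∫ x in S, ‖x + v‖ ^ β := by
    calc c₀ * r ^ (2 - (n : ℝ) + α) = (2 * r) ^ β * ((r / 4) ^ n * m₁) := by
          rw [hrexp, hc₀def, Real.mul_rpow (by norm_num) hr.le, div_pow, div_pow]; ring
      _ = (2 * r) ^ β * (volume (ball p (r / 4))).toReal := by rw [hvolB]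
      _ = ∫ _x in ball p (r / 4), (2 * r) ^ β := by
          rw [setIntegral_const, smul_eq_mul, mul_comm, measureReal_def]
      _ ≤ ∫ x in ball p (r / 4), ‖x + v‖ ^ β :=
          setIntegral_mono_on ((integrableOn_const_iff).mpr (Or.inr measure_ball_lt_top)) hIB
            measurableSet_ball hfB
      _ ≤ ∫ x in S, ‖x + v‖ ^ β :=
          setIntegral_mono_set hIS
            (Filter.Eventually.of_forall fun y => Real.rpow_nonneg (norm_nonneg _) β)
            (HasSubset.Subset.eventuallyLE hBsubS)
  have hhigh : ∫ x in S, ‖x + v‖ ^ β ≤ max c₀ I₁ * r ^ (2 - (n : ℝ) + α) := by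
    calc ∫ x in S, ‖x + v‖ ^ β
        = ∫ y in (fun x : EuclideanSpace ℝ (Fin n) => x + v) '' S, ‖y‖ ^ β := hval
      _ ≤ ∫ y in (closedBall (0 : EuclideanSpace ℝ (Fin n)) r)ᶜ, ‖y‖ ^ β := hup
      _ = r ^ (β + (n : ℝ)) * I₁ := hscale
      _ ≤ r ^ (β + (n : ℝ)) * max c₀ I₁ :=
          mul_le_mul_of_nonneg_left (le_max_right _ _) (Real.rpow_nonneg hr.le _)
      _ = max c₀ I₁ * r ^ (2 - (n : ℝ) + α) := by rw [hexp, mul_comm]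
  exact ⟨hIS, hlow, hhigh⟩
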